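/- Let M be an abelian group and let F, G, H : (ℤ/2ℤ)^n → M. If the number of triples (x,y,z) ∈ ((ℤ/2ℤ)^n)^3 with x + y + z = 0 and F(x) + G(y) + H(z) = 0 is at least η · 4^n, then for x, u, u' chosen independently and uniformly from (ℤ/2ℤ)^n, the probability that F(x) − F(x + u + u') = H(u') − H(u) is at least η². -/

import Mathlib

/-- If `F, G, H : (ℤ/2ℤ)^n → M` satisfy `F(x) + G(y) + H(z) = 0` on at least `η · 4^n` of the
triples with `x + y + z = 0`, then for `x, u, u'` uniform and independent the probability that
`F(x) − F(x + u + u') = H(u') − H(u)` is at least `η²` (i.e. the number of such triples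
`(x,u,u')` is at least `η² · 8^n`). -/
theorem test_to_one_cauchy_schwarz {n : ℕ} {M : Type*} [AddCommGroup M]
    (F G H : (Fin n → ZMod 2) → M) (η : ℝ) (hη : 0 ≤ η)
    (hcount : η * 4 ^ n ≤
      (Nat.card {p : (Fin n → ZMod 2) × (Fin n → ZMod 2) × (Fin n → ZMod 2) //
        p.1 + p.2.1 + p.2.2 = 0 ∧ F p.1 + G p.2.1 + H p.2.2 = 0} : ℝ)) :
    η ^ 2 * 8 ^ n ≤
      (Nat.card {t : (Fin n → ZMod 2) × (Fin n → ZMod 2) × (Fin n → ZMod 2) //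
        F t.1 - F (t.1 + t.2.1 + t.2.2) = H t.2.2 - H t.2.1} : ℝ) := by
  classical
  have h2 : ∀ a : ZMod 2, a + a = 0 := by decide
  have haa : ∀ v : Fin n → ZMod 2, v + v = 0 := by
    intro v; funext i; exact h2 (v i)
  have hcancel : ∀ a b : Fin n → ZMod 2, a + (a + b) = b := fun a b => by
    rw [← add_assoc, haa, zero_add]
  have hcardV : Fintype.card (Fin n → ZMod 2) = 2 ^ n := by
    simp
  set S2 : Finset ((Fin n → ZMod 2) × (Fin n → ZMod 2)) :=
    Finset.univ.filter (fun p => F p.1 + G p.2 + H (p.1 + p.2) = 0) with hS2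
  set f : (Fin n → ZMod 2) → ℕ :=
    fun y => (Finset.univ.filter (fun x => F x + G y + H (x + y) = 0)).card with hf
  set T : Finset ((Fin n → ZMod 2) × (Fin n → ZMod 2) × (Fin n → ZMod 2)) :=
    Finset.univ.filter (fun t => (F t.2.1 + G t.1 + H (t.2.1 + t.1) = 0) ∧
      (F t.2.2 + G t.1 + H (t.2.2 + t.1) = 0)) with hT
  set B : Finset ((Fin n → ZMod 2) × (Fin n → ZMod 2) × (Fin n → ZMod 2)) :=
    Finset.univ.filter
      (fun t => F t.1 - F (t.1 + t.2.1 + t.2.2) = H t.2.2 - H t.2.1) with hB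
  -- card of the first subtype equals S2.card
  have hA : Nat.card {p : (Fin n → ZMod 2) × (Fin n → ZMod 2) × (Fin n → ZMod 2) //
      p.1 + p.2.1 + p.2.2 = 0 ∧ F p.1 + G p.2.1 + H p.2.2 = 0} = S2.card := by
    rw [Nat.card_eq_fintype_card, Fintype.card_subtype]
    apply Finset.card_bij (fun p _ => (p.1, p.2.1))
    · rintro ⟨x, y, z⟩ hp
      simp only [hS2, Finset.mem_filter, Finset.mem_univ, true_and] at hp ⊢
      have hz : z = x + y := by
        have h0 := hp.1
        have h1 : x + y + (x + y + z) = x + y := by rw [h0, add_zero]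
        rwa [hcancel] at h1
      rw [← hz]; exact hp.2
    · rintro ⟨x, y, z⟩ hp ⟨x', y', z'⟩ hq h
      simp only [Finset.mem_filter, Finset.mem_univ, true_and] at hp hq
      simp only [Prod.mk.injEq] at h
      obtain ⟨h1, h2'⟩ := h
      have hz : z = x + y := by
        have h0 := hp.1
        have hh : x + y + (x + y + z) = x + y := by rw [h0, add_zero]
        rwa [hcancel] at hh
      have hz' : z' = x' + y' := by
        have h0 := hq.1
        have hh : x' + y' + (x' + y' + z') = x' + y' := by rw [h0, add_zero]
        rwa [hcancel] at hh
      simp only [Prod.mk.injEq]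
      exact ⟨h1, h2', by rw [hz, hz', h1, h2']⟩
    · rintro ⟨x, y⟩ hp
      simp only [hS2, Finset.mem_filter, Finset.mem_univ, true_and] at hp
      refine ⟨(x, y, x + y), ?_, rfl⟩
      simp only [Finset.mem_filter, Finset.mem_univ, true_and]
      exact ⟨haa (x + y), hp⟩
  -- S2.card = ∑ f
  have hS2card : S2.card = ∑ y : Fin n → ZMod 2, f y := by
    rw [hS2, Finset.card_filter, Fintype.sum_prod_type, Finset.sum_comm]
    refine Finset.sum_congr rfl fun y _ => ?_
    simp only [hf]
    exact (Finset.card_filter _ _).symm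
  -- T.card = ∑ f ^ 2
  have hTcard : T.card = ∑ y : Fin n → ZMod 2, f y ^ 2 := by
    rw [hT, Finset.card_filter, Fintype.sum_prod_type]
    refine Finset.sum_congr rfl fun y _ => ?_
    rw [Fintype.sum_prod_type]
    have hsplit : ∀ x x' : Fin n → ZMod 2,
        (if (F x + G y + H (x + y) = 0) ∧ (F x' + G y + H (x' + y) = 0)
          then (1 : ℕ) else 0)
        = (if F x + G y + H (x + y) = 0 then (1 : ℕ) else 0) *
          (if F x' + G y + H (x' + y) = 0 then (1 : ℕ) else 0) := by
      intro x x'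
      by_cases hx : F x + G y + H (x + y) = 0 <;>
        by_cases hx' : F x' + G y + H (x' + y) = 0 <;> simp [hx, hx']
    simp_rw [hsplit, ← Finset.mul_sum, ← Finset.sum_mul]
    rw [sq]; simp only [hf]; rw [Finset.card_filter]
  -- T.card ≤ B.card
  have hTB : T.card ≤ B.card := by
    apply Finset.card_le_card_of_injOn (fun t => (t.2.1, t.2.1 + t.1, t.2.2 + t.1))
    · rintro ⟨y, x, x'⟩ ht
      simp only [hT, hB, Finset.coe_filter, Set.mem_setOf_eq, Finset.mem_coe, Finset.mem_filter, Finset.mem_univ, true_and] at ht ⊢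
      obtain ⟨ha, hb⟩ := ht
      have harg : x + (x + y) + (x' + y) = x' := by
        rw [hcancel, add_comm x' y, hcancel]
      rw [harg]
      have key : F x - F x' =
          (F x + G y + H (x + y)) - (F x' + G y + H (x' + y))
            + (H (x' + y) - H (x + y)) := by abel
      rw [ha, hb] at key
      simpa using key
    · rintro ⟨y, x, x'⟩ _ ⟨y', z, z'⟩ _ h
      simp only [Prod.mk.injEq] at h
      obtain ⟨h1, h2', h3⟩ := h
      have hy : y = y' := by
        have := congrArg (fun v => x + v) h2'
        rw [hcancel, h1, hcancel] at this
        exact this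
      have hz : x' = z' := by
        have := congrArg (fun v => v + y) h3
        rw [add_assoc, haa, add_zero, hy, add_assoc, haa, add_zero] at this
        exact this
      simp only [Prod.mk.injEq]
      exact ⟨hy, h1, hz⟩
  -- card of target subtype
  have hBcard : Nat.card {t : (Fin n → ZMod 2) × (Fin n → ZMod 2) × (Fin n → ZMod 2) //
      F t.1 - F (t.1 + t.2.1 + t.2.2) = H t.2.2 - H t.2.1} = B.card := by
    rw [Nat.card_eq_fintype_card, Fintype.card_subtype]
  rw [hBcard]
  rw [hA] at hcount
  -- Cauchy–Schwarz
  have hCS : ((S2.card : ℝ)) ^ 2 ≤ (2 : ℝ) ^ n * (T.card : ℝ) := by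
    have := sq_sum_le_card_mul_sum_sq (s := (Finset.univ : Finset (Fin n → ZMod 2)))
      (f := fun y => (f y : ℝ))
    rw [Finset.card_univ, hcardV] at this
    calc ((S2.card : ℝ)) ^ 2 = (∑ y : Fin n → ZMod 2, (f y : ℝ)) ^ 2 := by
          rw [hS2card]; push_cast; ring
      _ ≤ (2 ^ n : ℕ) * ∑ y : Fin n → ZMod 2, (f y : ℝ) ^ 2 := this
      _ = (2 : ℝ) ^ n * (T.card : ℝ) := by rw [hTcard]; push_cast; ring
  have h2n : (0 : ℝ) < 2 ^ n := by positivity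
  have e48 : (8 : ℝ) ^ n * 2 ^ n = 4 ^ n * 4 ^ n := by
    rw [← mul_pow, ← mul_pow]; norm_num
  have key : η ^ 2 * 8 ^ n * 2 ^ n ≤ (B.card : ℝ) * 2 ^ n := by
    calc η ^ 2 * 8 ^ n * 2 ^ n = (η * 4 ^ n) ^ 2 := by
          rw [mul_assoc, e48]; ring
      _ ≤ (S2.card : ℝ) ^ 2 := by
          apply pow_le_pow_left₀ (by positivity) hcount
      _ ≤ (2 : ℝ) ^ n * (T.card : ℝ) := hCS
      _ ≤ (2 : ℝ) ^ n * (B.card : ℝ) := by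
          apply mul_le_mul_of_nonneg_left _ (le_of_lt h2n)
          exact_mod_cast hTB
      _ = (B.card : ℝ) * 2 ^ n := mul_comm _ _
  exact le_of_mul_le_mul_right key h2n
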